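/- Let m be a natural number and let H be a formal power series over ℚ in one variable u satisfying H · (1 − u · H^m) = 1 (equivalently, H = (1 − u·H^m)^{-1}). Then for every k ≥ 0 the coefficient of u^k in H equals (1/(m·k+1)) · binomial((m+1)·k, k). In particular this functional equation has exactly one solution in ℚ[[u]]. -/

import Mathlib

open PowerSeries

/-- Raney / Fuss–Catalan numbers over `ℚ`:
`fcA p k r = (r / (p*k + r)) * C(p*k + r, k)` for `k ≥ 1`, and `1` for `k = 0`. -/
noncomputable def fcA (p k r : ℕ) : ℚ :=
  if k = 0 then 1 else (r : ℚ) / (p * k + r) * (Nat.choose (p * k + r) k : ℚ)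

lemma fcA_zero (p r : ℕ) : fcA p 0 r = 1 := by simp [fcA]

lemma fcA_r_zero (p k : ℕ) (hk : k ≠ 0) : fcA p k 0 = 0 := by
  simp [fcA, hk]

/-- Pascal-type recurrence for Raney numbers. -/
lemma fcA_pascal (p : ℕ) (hp : 1 ≤ p) (k r : ℕ) :
    fcA p (k + 1) (r + 1) = fcA p (k + 1) r + fcA p k (r + p) := by
  obtain ⟨M, hMdef⟩ : ∃ M, M = p * (k + 1) + r := ⟨_, rfl⟩
  have hkM : k + 1 ≤ M := by
    have : k + 1 ≤ p * (k + 1) := Nat.le_mul_of_pos_left _ hp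
    omega
  have h2 : fcA p k (r + p) = ((r:ℚ) + p) / M * (Nat.choose M k : ℚ) := by
    rcases eq_or_ne k 0 with h | h
    · subst h
      have hM' : M = r + p := by simp at hMdef; omega
      subst hM'
      have hrp : ((r:ℚ) + p) ≠ 0 := by
        have : (1:ℚ) ≤ (p:ℚ) := by exact_mod_cast hp
        positivity
      simp only [fcA, if_pos rfl, Nat.choose_zero_right, Nat.cast_one, mul_one]
      push_cast
      rw [div_self hrp]
    · rw [fcA, if_neg h]
      push_cast [hMdef]
      ring_nf
  have h1 : fcA p (k + 1) r = (r:ℚ) / M * (Nat.choose M (k+1) : ℚ) := by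
    rw [fcA, if_neg (Nat.succ_ne_zero k)]
    push_cast [hMdef]
    ring_nf
  have h0 : fcA p (k + 1) (r + 1)
      = ((r:ℚ) + 1) / ((M:ℚ) + 1) * (Nat.choose (M+1) (k+1) : ℚ) := by
    rw [fcA, if_neg (Nat.succ_ne_zero k)]
    push_cast [hMdef]
    ring_nf
  have hMQ : (1:ℚ) ≤ (M:ℚ) := by exact_mod_cast Nat.one_le_iff_ne_zero.mpr (by omega)
  have hM0 : (M:ℚ) ≠ 0 := by linarith
  have hM10 : (M:ℚ) + 1 ≠ 0 := by linarith
  have hb' : (Nat.choose M (k+1):ℚ)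
      = (Nat.choose (M+1) (k+1):ℚ) * ((M:ℚ) - k) / ((M:ℚ) + 1) := by
    have hbn := Nat.choose_mul_succ_eq M (k+1)
    rw [show M + 1 - (k+1) = M - k from by omega] at hbn
    have hq := congrArg (fun n : ℕ => (n:ℚ)) hbn
    push_cast [Nat.cast_sub (show k ≤ M from by omega)] at hq
    field_simp
    linear_combination hq
  have hc' : (Nat.choose M k : ℚ)
      = (Nat.choose (M+1) (k+1):ℚ) * ((k:ℚ) + 1) / ((M:ℚ) + 1) := by
    have hcn := Nat.add_one_mul_choose_eq M k
    have hq := congrArg (fun n : ℕ => (n:ℚ)) hcn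
    push_cast at hq
    field_simp
    linear_combination hq
  have hM : (M:ℚ) = (p:ℚ) * k + p + r := by rw [hMdef]; push_cast; ring
  rw [h0, h1, h2, hb', hc']
  have hpQ : (1:ℚ) ≤ (p:ℚ) := by exact_mod_cast hp
  have hk0 : (0:ℚ) ≤ (p:ℚ) * k := by positivity
  have hr0 : (0:ℚ) ≤ (r:ℚ) := by positivity
  rw [hM]
  have hpos : ((p:ℚ) * k + p + r) ≠ 0 := by linarith
  have hpos1 : ((p:ℚ) * k + p + r + 1) ≠ 0 := by linarith
  field_simp
  ring

/-- Raney convolution identity. -/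
lemma fcA_conv (p : ℕ) (hp : 1 ≤ p) (s k r : ℕ) :
    fcA p k (r + s) = ∑ i ∈ Finset.range (k + 1), fcA p i r * fcA p (k - i) s := by
  induction k generalizing r with
  | zero => simp [fcA_zero]
  | succ k ih =>
    induction r with
    | zero =>
      rw [Finset.sum_eq_single 0]
      · simp [fcA_zero]
      · intro i hi hne
        rw [fcA_r_zero p i hne, zero_mul]
      · intro h
        simp at h
    | succ r ihr =>
      have key : ∀ i ∈ Finset.range (k + 2), fcA p i (r + 1) * fcA p (k + 1 - i) s
          = fcA p i r * fcA p (k + 1 - i) s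
            + (if i = 0 then 0 else fcA p (i - 1) (r + p) * fcA p (k + 1 - i) s) := by
        intro i _
        rcases eq_or_ne i 0 with h | h
        · simp [h, fcA_zero]
        · obtain ⟨j, rfl⟩ := Nat.exists_eq_succ_of_ne_zero h
          rw [if_neg h, fcA_pascal p hp j r]
          simp only [Nat.succ_sub_one]
          ring
      rw [Finset.sum_congr rfl key, Finset.sum_add_distrib]
      have e1 : ∑ i ∈ Finset.range (k + 2), fcA p i r * fcA p (k + 1 - i) s
          = fcA p (k+1) (r + s) := (ihr).symm
      have e2 : (∑ i ∈ Finset.range (k + 2),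
            if i = 0 then 0 else fcA p (i - 1) (r + p) * fcA p (k + 1 - i) s)
          = fcA p k (r + p + s) := by
        rw [Finset.sum_range_succ' (fun i => if i = 0 then (0:ℚ)
          else fcA p (i - 1) (r + p) * fcA p (k + 1 - i) s) (k+1)]
        simp only [Nat.succ_ne_zero, if_false, if_pos rfl, Nat.succ_sub_one, add_zero,
          Nat.succ_sub_succ, if_true, Nat.sub_zero]
        exact (ih (r + p)).symm
      rw [e1, e2, show r + 1 + s = (r + s) + 1 from by omega,
        fcA_pascal p hp k (r + s), show r + s + p = r + p + s from by omega]

/-- The Fuss–Catalan power series. -/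
noncomputable def Hfc (p : ℕ) : PowerSeries ℚ := PowerSeries.mk (fun k => fcA p k 1)

lemma coeff_Hfc_pow (p : ℕ) (hp : 1 ≤ p) (r : ℕ) (hr : 1 ≤ r) (k : ℕ) :
    coeff k (Hfc p ^ r) = fcA p k r := by
  induction r generalizing k with
  | zero => omega
  | succ r ih =>
    rcases Nat.eq_or_lt_of_le hr with h | h
    · rw [← h, pow_one, Hfc, coeff_mk]
    · have hr1 : 1 ≤ r := by omega
      rw [pow_succ, coeff_mul, Finset.Nat.sum_antidiagonal_eq_sum_range_succ_mk,
        fcA_conv p hp 1 k r]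
      refine Finset.sum_congr rfl fun i hi => ?_
      dsimp only
      rw [ih hr1, Hfc, coeff_mk]

lemma Hfc_eq (m : ℕ) : Hfc (m+1) * (1 - X * Hfc (m+1) ^ m) = 1 := by
  have hp : 1 ≤ m + 1 := by omega
  have key : Hfc (m+1) - X * Hfc (m+1) ^ (m+1) = 1 := by
    ext k
    rw [map_sub, coeff_one]
    cases k with
    | zero =>
      rw [coeff_zero_X_mul, Hfc, coeff_mk, fcA_zero]
      norm_num
    | succ k =>
      rw [coeff_succ_X_mul, coeff_Hfc_pow (m+1) hp (m+1) hp k, Hfc, coeff_mk]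
      have := fcA_pascal (m+1) hp k 0
      rw [fcA_r_zero (m+1) (k+1) (Nat.succ_ne_zero k), zero_add, zero_add] at this
      rw [this]
      simp
  calc Hfc (m+1) * (1 - X * Hfc (m+1) ^ m)
      = Hfc (m+1) - X * Hfc (m+1) ^ (m+1) := by ring
    _ = 1 := key

lemma solution_unique (m : ℕ) (H₁ H₂ : PowerSeries ℚ)
    (h₁ : H₁ * (1 - X * H₁ ^ m) = 1) (h₂ : H₂ * (1 - X * H₂ ^ m) = 1) : H₁ = H₂ := by
  have e : (H₁ - H₂) = X * (H₁ ^ (m+1) - H₂ ^ (m+1)) := by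
    have e₁ : H₁ - X * H₁ ^ (m+1) = 1 := by rw [← h₁]; ring
    have e₂ : H₂ - X * H₂ ^ (m+1) = 1 := by rw [← h₂]; ring
    linear_combination e₁ - e₂
  obtain ⟨c, hc⟩ := sub_dvd_pow_sub_pow H₁ H₂ (m+1)
  rw [hc] at e
  have : (H₁ - H₂) * (1 - X * c) = 0 := by linear_combination e
  rcases mul_eq_zero.mp this with h | h
  · exact sub_eq_zero.mp h
  · exfalso
    have := congrArg (constantCoeff (R := ℚ)) h
    simp [constantCoeff_X] at this

lemma fcA_one_eq (m k : ℕ) :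
    fcA (m+1) k 1 = (1 / (m * k + 1) : ℚ) * (Nat.choose ((m + 1) * k) k : ℚ) := by
  rcases eq_or_ne k 0 with h | h
  · subst h; simp [fcA_zero]
  · rw [fcA, if_neg h]
    have hkle : k ≤ (m+1) * k := Nat.le_mul_of_pos_left _ (by omega)
    have hbn := Nat.choose_mul_succ_eq ((m+1) * k) k
    rw [show (m+1) * k + 1 - k = m * k + 1 from by
      have : (m+1) * k = m * k + k := by ring
      omega] at hbn
    have hq := congrArg (fun n : ℕ => (n:ℚ)) hbn
    push_cast at hq
    have d1 : ((m:ℚ)+1) * k + 1 ≠ 0 := by positivity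
    have d2 : (m:ℚ) * k + 1 ≠ 0 := by positivity
    field_simp
    push_cast
    linear_combination -hq

/-- For `H ∈ ℚ[[u]]` satisfying `H · (1 − u·H^m) = 1`, the coefficient of `u^k` in `H`
equals `(1/(m·k+1)) · binom((m+1)·k, k)`; in particular the functional equation has
exactly one solution. -/
theorem central_slope_coeff_formula (m : ℕ) :
    (∀ H : PowerSeries ℚ, H * (1 - PowerSeries.X * H ^ m) = 1 →
      ∀ k : ℕ, PowerSeries.coeff (R := ℚ) k H =
        (1 / (m * k + 1) : ℚ) * (Nat.choose ((m + 1) * k) k : ℚ)) ∧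
    (∃! H : PowerSeries ℚ, H * (1 - PowerSeries.X * H ^ m) = 1) := by
  constructor
  · intro H hH k
    have hH' : H = Hfc (m+1) := solution_unique m H (Hfc (m+1)) hH (Hfc_eq m)
    rw [hH', Hfc, coeff_mk, fcA_one_eq]
  · exact ⟨Hfc (m+1), Hfc_eq m, fun y hy => solution_unique m y (Hfc (m+1)) hy (Hfc_eq m)⟩
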